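/- Let g be a finite-dimensional Lie algebra, m a positive integer, and U = Ug[[ℏ]], U' = {Σ x_n ℏ^n | x_n ∈ Ug_{≤n}} ⊆ U (the completed Rees algebra for the PBW filtration). Give Ug^{⊗m} the filtration (Ug^{⊗m})_k = (Ug_{≤k})^{⊗m}. Then the corresponding completed Rees algebra Ug^{⊗m}[[ℏ]]^o equals the intersection, over i = 1,…,m, of the subalgebras U^{⊗(i−1)} ⊗ U' ⊗ U^{⊗(m−i)} of U^{⊗m} (completed tensor products over k[[ℏ]]). -/

import Mathlib

/-!
STATEMENT 6: For a finite-dimensional Lie algebra `g`, `m ≥ 1`,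
`U = Ug[[ℏ]]` and `U'` the completed Rees algebra of the PBW filtration,
the completed Rees algebra of `Ug^{⊗m}` for the filtration `(Ug_{≤k})^{⊗m}`
equals the intersection over `i = 1, …, m` of the subalgebras
`U^{⊗(i-1)} ⊗ U' ⊗ U^{⊗(m-i)}` of `U^{⊗m}` (completed tensor products over `k[[ℏ]]`).

We model the completed tensor power `U^{⊗m}` as `PowerSeries (Ug^{⊗m})` with
`Ug^{⊗m} = TP k Ug (m-1)` built from iterated binary tensor products.  Under
this identification, `U^{⊗(i-1)} ⊗ U' ⊗ U^{⊗(m-i)}` consists of the series whose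
`k`-th coefficient lies in `Ug ⊗ ⋯ ⊗ Ug_{≤k} ⊗ ⋯ ⊗ Ug` (the `i`-th slot filtered),
and the completed Rees algebra of `Ug^{⊗m}` of the series whose `k`-th coefficient
lies in `(Ug_{≤k})^{⊗m}`.  Below `m = n + 1 ≥ 1`.
-/

open TensorProduct


section TPmachinery

variable (k : Type) [CommRing k] (H : Type) [Ring H] [Algebra k H]

/-- Auxiliary: `(n+1)`-fold tensor power of the algebra `H`, with its algebra structure. -/
noncomputable def TPAux : ℕ → Σ (A : Type), Σ' (_ : Ring A), Algebra k A
  | 0 => ⟨H, ⟨inferInstance, inferInstance⟩⟩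
  | n + 1 =>
    let p := TPAux n
    letI := p.2.1
    letI := p.2.2
    ⟨H ⊗[k] p.1, ⟨inferInstance, inferInstance⟩⟩

/-- `TP k H n` models `H^{⊗(n+1)}`. -/
noncomputable def TP (n : ℕ) : Type := (TPAux k H n).1

noncomputable instance (n : ℕ) : Ring (TPAux k H n).1 := (TPAux k H n).2.1
noncomputable instance (n : ℕ) : Algebra k (TPAux k H n).1 := (TPAux k H n).2.2
noncomputable instance (n : ℕ) : Ring (TP k H n) := (TPAux k H n).2.1
noncomputable instance (n : ℕ) : Algebra k (TP k H n) := (TPAux k H n).2.2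

/-- `π^{⊗(n+1)}` built from a linear endomorphism of `H`. -/
noncomputable def Pmap (π : H →ₗ[k] H) : ∀ n, TP k H n →ₗ[k] TP k H n
  | 0 => π
  | n + 1 => TensorProduct.map π (Pmap π n)

/-- Apply `Δ` to the head factor: `Δ ⊗ id^{⊗ n} : H^{⊗(n+1)} → H^{⊗(n+2)}`. -/
noncomputable def headDelta (Δc : H →ₗ[k] H ⊗[k] H) : ∀ n, TP k H n →ₗ[k] TP k H (n + 1)
  | 0 => Δc
  | n + 1 => (TensorProduct.assoc k H H (TP k H n)).toLinearMap ∘ₗ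
      (TensorProduct.map Δc LinearMap.id)

/-- Iterated coproduct `Δ^{(n+1)} : H → H^{⊗(n+1)}`, defined by `Δ^{(1)} = id` and
`Δ^{(n)} = (Δ ⊗ id^{⊗(n-2)}) ∘ Δ^{(n-1)}`. -/
noncomputable def Dmap (Δc : H →ₗ[k] H ⊗[k] H) : ∀ n, H →ₗ[k] TP k H n
  | 0 => LinearMap.id
  | n + 1 => headDelta k H Δc n ∘ₗ Dmap Δc n

/-- Elementary tensors in `TP k H n`. -/
noncomputable def tpElem : ∀ n, (Fin (n + 1) → H) → TP k H n
  | 0, f => f 0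
  | n + 1, f => f 0 ⊗ₜ[k] tpElem n (fun i => f i.succ)

end TPmachinery


/-- Tensor product of a family of submodules, as a submodule of `TP k H n`. -/
noncomputable def tensorSub (k : Type) [CommRing k] (H : Type) [Ring H] [Algebra k H] :
    ∀ n, (Fin (n + 1) → Submodule k H) → Submodule k (TP k H n)
  | 0, f => f 0
  | n + 1, f => LinearMap.range
      (TensorProduct.mapIncl (f 0) (tensorSub k H n (fun i => f i.succ)))

/-- PBW filtration: `Ug_{≤ n}`. -/
noncomputable def UEAfil (k : Type) [CommRing k] (g : Type) [LieRing g] [LieAlgebra k g]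
    (n : ℕ) : Submodule k (UniversalEnvelopingAlgebra k g) :=
  (Submodule.span k
    ({1} ∪ Set.range (UniversalEnvelopingAlgebra.ι k (L := g)))) ^ n

-- Auxiliary development for stmt_6

section RangeLemmas

variable {R : Type} [CommRing R] {M N P Q : Type}
  [AddCommGroup M] [Module R M] [AddCommGroup N] [Module R N]
  [AddCommGroup P] [Module R P] [AddCommGroup Q] [Module R Q]

lemma aux_range_lTensor_of_range (u : P →ₗ[R] Q) :
    LinearMap.range (LinearMap.lTensor M (LinearMap.range u).subtype)
      = LinearMap.range (LinearMap.lTensor M u) := by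
  have h1 : LinearMap.lTensor M u
      = (LinearMap.lTensor M (LinearMap.range u).subtype).comp
        (LinearMap.lTensor M u.rangeRestrict) := by
    rw [← LinearMap.lTensor_comp]
    congr 1
  rw [h1, LinearMap.range_comp_of_range_eq_top _
    (LinearMap.range_eq_top.mpr (LinearMap.lTensor_surjective M u.surjective_rangeRestrict))]

lemma aux_range_mapIncl_top_right (T : Submodule R Q) :
    LinearMap.range (TensorProduct.mapIncl (⊤ : Submodule R P) T)
      = LinearMap.range (LinearMap.lTensor P T.subtype) := by
  have hs : Function.Surjective (⊤ : Submodule R P).subtype := fun x => ⟨⟨x, trivial⟩, rfl⟩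
  simp only [TensorProduct.mapIncl]; rw [← LinearMap.lTensor_comp_rTensor,
    LinearMap.range_comp_of_range_eq_top _
      (LinearMap.range_eq_top.mpr (LinearMap.rTensor_surjective _ hs))]

lemma aux_range_mapIncl_top_left (A : Submodule R P) :
    LinearMap.range (TensorProduct.mapIncl A (⊤ : Submodule R Q))
      = LinearMap.range (LinearMap.rTensor Q A.subtype) := by
  have hs : Function.Surjective (⊤ : Submodule R Q).subtype := fun x => ⟨⟨x, trivial⟩, rfl⟩
  simp only [TensorProduct.mapIncl]; rw [← LinearMap.rTensor_comp_lTensor,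
    LinearMap.range_comp_of_range_eq_top _
      (LinearMap.range_eq_top.mpr (LinearMap.lTensor_surjective _ hs))]

lemma aux_lTensor_lTensor_assoc (f : P →ₗ[R] Q) :
    (LinearMap.lTensor M (LinearMap.lTensor N f)).comp
        (TensorProduct.assoc R M N P).toLinearMap
      = (TensorProduct.assoc R M N Q).toLinearMap.comp
        (LinearMap.lTensor (M ⊗[R] N) f) := by
  apply TensorProduct.ext_threefold
  intro x y z
  simp

lemma aux_lTensor_assoc_apply (f : P →ₗ[R] Q) (w : (M ⊗[R] N) ⊗[R] P) :
    LinearMap.lTensor M (LinearMap.lTensor N f) (TensorProduct.assoc R M N P w)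
      = TensorProduct.assoc R M N Q (LinearMap.lTensor (M ⊗[R] N) f w) :=
  LinearMap.congr_fun (aux_lTensor_lTensor_assoc f) w

lemma aux_lTensor_assoc_symm_apply (f : P →ₗ[R] Q) (w : M ⊗[R] (N ⊗[R] P)) :
    (TensorProduct.assoc R M N Q).symm (LinearMap.lTensor M (LinearMap.lTensor N f) w)
      = LinearMap.lTensor (M ⊗[R] N) f ((TensorProduct.assoc R M N P).symm w) := by
  apply (TensorProduct.assoc R M N Q).injective
  rw [LinearEquiv.apply_symm_apply, ← aux_lTensor_assoc_apply, LinearEquiv.apply_symm_apply]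

lemma aux_fix_of_range {u : P →ₗ[R] Q} {p : Q →ₗ[R] Q} (h : p ∘ₗ u = u) {x : Q}
    (hx : x ∈ LinearMap.range u) : p x = x := by
  obtain ⟨y, rfl⟩ := hx
  exact LinearMap.congr_fun h y

end RangeLemmas

section QmapDev

variable (k : Type) [Field k] (H : Type) [Ring H] [Algebra k H]

noncomputable def Qmap : ∀ n, (Fin (n + 1) → (H →ₗ[k] H)) → TP k H n →ₗ[k] TP k H n
  | 0, q => q 0
  | n + 1, q => TensorProduct.map (q 0) (Qmap n (fun i => q i.succ))

lemma Qmap_fix : ∀ (n : ℕ) (f : Fin (n + 1) → Submodule k H)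
    (q : Fin (n + 1) → (H →ₗ[k] H)), (∀ i, ∀ y ∈ f i, q i y = y) →
    ∀ x ∈ tensorSub k H n f, Qmap k H n q x = x := by
  intro n
  induction n with
  | zero =>
    intro f q hq x hx
    exact hq 0 x hx
  | succ n ih =>
    intro f q hq x hx
    simp only [tensorSub] at hx
    obtain ⟨y, rfl⟩ := hx
    have h1 : (q 0) ∘ₗ (f 0).subtype = (f 0).subtype :=
      LinearMap.ext fun z => hq 0 z z.2
    have h2 : (Qmap k H n (fun i => q i.succ)) ∘ₗ
        (tensorSub k H n (fun i => f i.succ)).subtype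
        = (tensorSub k H n (fun i => f i.succ)).subtype :=
      LinearMap.ext fun z => ih _ _ (fun i => hq i.succ) z z.2
    have key : (Qmap k H (n + 1) q) ∘ₗ
        (TensorProduct.mapIncl (f 0) (tensorSub k H n (fun i => f i.succ)))
        = TensorProduct.mapIncl (f 0) (tensorSub k H n (fun i => f i.succ)) := by
      show (TensorProduct.map (q 0) (Qmap k H n (fun i => q i.succ))) ∘ₗ
        (TensorProduct.map (f 0).subtype (tensorSub k H n (fun i => f i.succ)).subtype) = _
      rw [← TensorProduct.map_comp, h1, h2]
    exact LinearMap.congr_fun key y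

lemma Qmap_mem : ∀ (n : ℕ) (f : Fin (n + 1) → Submodule k H)
    (q : Fin (n + 1) → (H →ₗ[k] H)), (∀ i, LinearMap.range (q i) ≤ f i) →
    ∀ x, Qmap k H n q x ∈ tensorSub k H n f := by
  intro n
  induction n with
  | zero =>
    intro f q hq x
    exact hq 0 ⟨x, rfl⟩
  | succ n ih =>
    intro f q hq x
    simp only [tensorSub]
    have key : (Qmap k H (n + 1) q : TP k H (n+1) →ₗ[k] TP k H (n+1))
        = (TensorProduct.mapIncl (f 0) (tensorSub k H n (fun i => f i.succ))).comp
          (TensorProduct.map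
            ((q 0).codRestrict (f 0) (fun y => hq 0 ⟨y, rfl⟩))
            ((Qmap k H n (fun i => q i.succ)).codRestrict
              (tensorSub k H n (fun i => f i.succ))
              (fun y => ih _ _ (fun i => hq i.succ) y))) := by
      show TensorProduct.map (q 0) (Qmap k H n (fun i => q i.succ)) = _
      simp only [TensorProduct.mapIncl]; rw [← TensorProduct.map_comp,
        LinearMap.subtype_comp_codRestrict, LinearMap.subtype_comp_codRestrict]
    rw [key]
    exact ⟨_, rfl⟩

lemma Qmap_id : ∀ n, Qmap k H n (fun _ => LinearMap.id) = LinearMap.id := by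
  intro n
  induction n with
  | zero => rfl
  | succ n ih =>
    show TensorProduct.map LinearMap.id (Qmap k H n (fun _ => LinearMap.id)) = _
    rw [ih, TensorProduct.map_id]
    rfl

lemma tensorSub_top : ∀ n, tensorSub k H n (fun _ => (⊤ : Submodule k H)) = ⊤ := by
  intro n
  rw [eq_top_iff]
  intro x _
  have h := Qmap_mem k H n (fun _ => ⊤) (fun _ => LinearMap.id) (fun _ => le_top) x
  rwa [Qmap_id, LinearMap.id_apply] at h

lemma tensorSub_succ_eq (n : ℕ) (f : Fin (n + 2) → Submodule k H) (A : Submodule k H)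
    (B : Submodule k (TP k H n)) (hA : f 0 = A)
    (hB : tensorSub k H n (fun t => f t.succ) = B) :
    tensorSub k H (n + 1) f = LinearMap.range (TensorProduct.mapIncl A B) := by
  subst hA
  subst hB
  simp only [tensorSub]
  rfl

lemma tensorSub_onehot_succ (n : ℕ) (gf : Fin (n + 2) → Submodule k H) (i : Fin (n + 1)) :
    tensorSub k H (n + 1) (fun t => if t = i.succ then gf t else ⊤)
      = LinearMap.range (LinearMap.lTensor H
          (tensorSub k H n (fun t => if t = i then gf t.succ else ⊤)).subtype) := by
  rw [tensorSub_succ_eq k H n _ ⊤ (tensorSub k H n (fun t => if t = i then gf t.succ else ⊤))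
      (if_neg (Ne.symm (Fin.succ_ne_zero i)))
      (congrArg (tensorSub k H n) (funext fun t => by simp [Fin.succ_inj])),
    aux_range_mapIncl_top_right]

lemma tensorSub_onehot_zero (n : ℕ) (gf : Fin (n + 2) → Submodule k H) :
    tensorSub k H (n + 1) (fun t => if t = 0 then gf t else ⊤)
      = LinearMap.range (LinearMap.rTensor (TP k H n) (gf 0).subtype) := by
  rw [tensorSub_succ_eq k H n _ (gf 0) ⊤ (if_pos rfl)
      (by rw [show (fun t : Fin (n + 1) => if t.succ = (0 : Fin (n + 2)) then gf t.succ else ⊤)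
            = (fun _ => (⊤ : Submodule k H)) from funext fun t => if_neg (Fin.succ_ne_zero t)]
          exact tensorSub_top k H n),
    aux_range_mapIncl_top_left]

set_option maxHeartbeats 1600000 in
lemma lemN : ∀ (n : ℕ) (M : Type) [AddCommGroup M] [Module k M]
    (gf : Fin (n + 1) → Submodule k H) (q : Fin (n + 1) → (H →ₗ[k] H)),
    (∀ i, ∀ y ∈ gf i, q i y = y) →
    ∀ (x : M ⊗[k] TP k H n),
    (∀ i, x ∈ LinearMap.range (LinearMap.lTensor M
        (tensorSub k H n (fun t => if t = i then gf t else ⊤)).subtype)) →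
    LinearMap.lTensor M (Qmap k H n q) x = x := by
  intro n
  induction n with
  | zero =>
    intro M _ _ gf q hq x hx
    have hS : tensorSub k H 0 (fun t => if t = (0 : Fin 1) then gf t else ⊤) = gf 0 := by
      simp [tensorSub]
      rfl
    have h1 : (Qmap k H 0 q) ∘ₗ
        (tensorSub k H 0 (fun t => if t = (0 : Fin 1) then gf t else ⊤)).subtype
        = (tensorSub k H 0 (fun t => if t = (0 : Fin 1) then gf t else ⊤)).subtype := by
      apply LinearMap.ext
      intro z
      exact hq 0 z.1 (by rw [← hS]; exact z.2)
    refine aux_fix_of_range ?_ (hx 0)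
    rw [← LinearMap.lTensor_comp, h1]
  | succ n ih =>
    intro M _ _ gf q hq x hx
    set q' : Fin (n + 1) → (H →ₗ[k] H) := fun i => q i.succ with hq'def
    set T' : Fin (n + 1) → Submodule k (TP k H n) :=
      fun i => tensorSub k H n (fun t => if t = i then gf t.succ else ⊤) with hT'def
    -- head step
    have hx0 : x ∈ LinearMap.range (LinearMap.lTensor M
        (LinearMap.rTensor (TP k H n) (gf 0).subtype)) := by
      have h := hx 0
      rw [tensorSub_onehot_zero k H n gf] at h
      have e := aux_range_lTensor_of_range (R := k) (M := M) (P := (gf 0) ⊗[k] TP k H n)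
        (Q := H ⊗[k] TP k H n) (LinearMap.rTensor (TP k H n) (gf 0).subtype)
      rw [← e]
      exact h
    have hcomp0 : (q 0) ∘ₗ (gf 0).subtype = (gf 0).subtype :=
      LinearMap.ext fun z => hq 0 z z.2
    have hhead : LinearMap.lTensor M (LinearMap.rTensor (TP k H n) (q 0)) x = x := by
      obtain ⟨y, hyx⟩ := hx0
      rw [← hyx, ← LinearMap.comp_apply, ← LinearMap.lTensor_comp, ← LinearMap.rTensor_comp,
        hcomp0]
    -- tail step, via assoc and ih
    have hxs : ∀ i : Fin (n + 1), x ∈ LinearMap.range (LinearMap.lTensor M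
        (LinearMap.lTensor H (T' i).subtype)) := by
      intro i
      have h := hx i.succ
      rw [tensorSub_onehot_succ k H n gf i] at h
      have e := aux_range_lTensor_of_range (R := k) (M := M) (P := H ⊗[k] (T' i))
        (Q := H ⊗[k] TP k H n) (LinearMap.lTensor H (T' i).subtype)
      rw [← e]
      exact h
    have hy : ∀ i : Fin (n + 1), (TensorProduct.assoc k M H (TP k H n)).symm x ∈
        LinearMap.range (LinearMap.lTensor (M ⊗[k] H) (T' i).subtype) := by
      intro i
      obtain ⟨z, hz⟩ := hxs i
      refine ⟨(TensorProduct.assoc k M H (T' i)).symm z, ?_⟩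
      rw [← hz]
      exact (aux_lTensor_assoc_symm_apply (T' i).subtype z).symm
    have hih := ih (M ⊗[k] H) (fun i => gf i.succ) q' (fun i => hq i.succ)
      ((TensorProduct.assoc k M H (TP k H n)).symm x) hy
    have htail : LinearMap.lTensor M (LinearMap.lTensor H (Qmap k H n q')) x = x := by
      have h2 := aux_lTensor_assoc_symm_apply (M := M) (N := H) (Qmap k H n q') x
      rw [hih] at h2
      exact (TensorProduct.assoc k M H (TP k H n)).symm.injective h2
    -- combine
    have hQ : (Qmap k H (n + 1) q : TP k H (n + 1) →ₗ[k] TP k H (n + 1))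
        = (LinearMap.rTensor (TP k H n) (q 0)).comp
          (LinearMap.lTensor H (Qmap k H n q')) := by
      rw [LinearMap.rTensor_comp_lTensor]
      rfl
    erw [hQ, LinearMap.lTensor_comp, LinearMap.comp_apply]
    exact Eq.trans (congrArg _ htail) hhead

set_option maxHeartbeats 1600000 in
lemma mainLem (n : ℕ) (gf : Fin (n + 1) → Submodule k H) (x : TP k H n)
    (hx : ∀ i, x ∈ tensorSub k H n (fun t => if t = i then gf t else ⊤)) :
    x ∈ tensorSub k H n gf := by
  have hproj : ∀ S : Submodule k H, ∃ p : H →ₗ[k] H,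
      (∀ y ∈ S, p y = y) ∧ LinearMap.range p ≤ S := by
    intro S
    obtain ⟨S', hS'⟩ := Submodule.exists_isCompl S
    refine ⟨S.subtype ∘ₗ (S.projectionOnto S' hS'), fun y hy => ?_, ?_⟩
    · have := Submodule.linearProjOfIsCompl_apply_left hS' ⟨y, hy⟩
      simp only [LinearMap.comp_apply, Submodule.subtype_apply]
      rw [this]
    · rintro _ ⟨z, rfl⟩
      exact (S.projectionOnto S' hS' z).2
  choose q hq1 hq2 using fun i => hproj (gf i)
  suffices h : Qmap k H n q x = x by
    rw [← h]
    exact Qmap_mem k H n gf q hq2 x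
  cases n with
  | zero =>
    refine hq1 0 x ?_
    have h := hx 0
    simp [tensorSub] at h
    exact h
  | succ n =>
    have htail : LinearMap.lTensor H (Qmap k H n (fun i => q i.succ)) x = x := by
      apply lemN k H n H (fun i => gf i.succ) (fun i => q i.succ) (fun i => hq1 i.succ)
      intro i
      have h := hx i.succ
      rwa [tensorSub_onehot_succ k H n gf i] at h
    have hx0 : x ∈ LinearMap.range (LinearMap.rTensor (TP k H n) (gf 0).subtype) := by
      have h := hx 0
      rwa [tensorSub_onehot_zero k H n gf] at h
    have hcomp0 : (q 0) ∘ₗ (gf 0).subtype = (gf 0).subtype :=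
      LinearMap.ext fun z => hq1 0 z z.2
    have hhead : LinearMap.rTensor (TP k H n) (q 0) x = x := by
      obtain ⟨y, hyx⟩ := hx0
      rw [← hyx, ← LinearMap.comp_apply, ← LinearMap.rTensor_comp, hcomp0]
    show TensorProduct.map (q 0) (Qmap k H n (fun i => q i.succ)) x = x
    rw [← LinearMap.rTensor_comp_lTensor]
    exact (congrArg (LinearMap.rTensor (TP k H n) (q 0)) htail).trans hhead

lemma tensorSub_mono : ∀ (n : ℕ) (f g : Fin (n + 1) → Submodule k H),
    (∀ i, f i ≤ g i) → tensorSub k H n f ≤ tensorSub k H n g := by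
  intro n
  induction n with
  | zero => intro f g h; exact h 0
  | succ n ih =>
    intro f g h
    simp only [tensorSub]
    rintro _ ⟨y, rfl⟩
    have key : TensorProduct.mapIncl (f 0) (tensorSub k H n (fun i => f i.succ))
        = (TensorProduct.mapIncl (g 0) (tensorSub k H n (fun i => g i.succ))).comp
          (TensorProduct.map (Submodule.inclusion (h 0))
            (Submodule.inclusion (ih _ _ (fun i => h i.succ)))) := by
      simp only [TensorProduct.mapIncl]; rw [← TensorProduct.map_comp]
      congr 1
    rw [key]
    exact ⟨_, rfl⟩

end QmapDev


theorem stmt_6 (k : Type) [Field k] [CharZero k]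
    (g : Type) [LieRing g] [LieAlgebra k g] [Module.Finite k g]
    (n : ℕ) (f : PowerSeries (TP k (UniversalEnvelopingAlgebra k g) n)) :
    (∀ j : ℕ, PowerSeries.coeff j f ∈
        tensorSub k _ n (fun _ => UEAfil k g j)) ↔
      (∀ i : Fin (n + 1), ∀ j : ℕ, PowerSeries.coeff j f ∈
        tensorSub k _ n (fun t => if t = i then UEAfil k g j else ⊤)) := by
  constructor
  · intro h i j
    refine tensorSub_mono k _ n _ _ ?_ (h j)
    intro t
    by_cases ht : t = i
    · rw [if_pos ht]
    · rw [if_neg ht]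
      exact le_top
  · intro h j
    exact mainLem k _ n (fun _ => UEAfil k g j) _ (fun i => h i j)
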